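/- Let λ > 0 and α : ℝ → ℝ continuous with compact support in [0,∞). The unique solution u of u'' = -λ²u - α vanishing at infinity (with u' also vanishing at infinity) satisfies u(0) = -λ⁻¹ ∫₀^∞ sin(λτ) α(τ) dτ. -/

import Mathlib

open MeasureTheory Real Set Filter

theorem stmt2 (l : ℝ) (hl : 0 < l) (α : ℝ → ℝ) (hcont : Continuous α)
    (hsupp : HasCompactSupport α) (hneg : ∀ t < 0, α t = 0)
    (u : ℝ → ℝ) (hu2 : ContDiff ℝ 2 u)
    (hueq : ∀ t, deriv (deriv u) t = -l ^ 2 * u t - α t)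
    (hu0 : Tendsto u atTop (nhds 0)) (hu0' : Tendsto (deriv u) atTop (nhds 0)) :
    u 0 = -l⁻¹ * ∫ τ in Ici (0 : ℝ), Real.sin (l * τ) * α τ := by
  have hu2' : ContDiff ℝ 1 (deriv u) := by
    have h : ContDiff ℝ (1 + 1 : WithTop ℕ∞) u := by norm_num; exact hu2
    exact (contDiff_succ_iff_deriv.mp h).2.2
  have hud : Differentiable ℝ u := hu2.differentiable (by norm_num)
  have hud' : Differentiable ℝ (deriv u) := hu2'.differentiable one_ne_zero
  set E : ℝ → ℝ := fun t => Real.sin (l * t) * deriv u t - l * Real.cos (l * t) * u t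
    with hE
  have hEderiv : ∀ t, HasDerivAt E (-(Real.sin (l * t) * α t)) t := by
    intro t
    have h1 : HasDerivAt (fun t => Real.sin (l * t)) (l * Real.cos (l * t)) t := by
      simpa [mul_comm, Function.comp_def] using (Real.hasDerivAt_sin (l * t)).comp t
        ((hasDerivAt_id t).const_mul l)
    have h2 : HasDerivAt (fun t => Real.cos (l * t)) (-(l * Real.sin (l * t))) t := by
      have := (Real.hasDerivAt_cos (l * t)).comp t ((hasDerivAt_id t).const_mul l)
      simpa [mul_comm, Function.comp_def] using this
    have hu' : HasDerivAt u (deriv u t) t := (hud t).hasDerivAt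
    have hu'' : HasDerivAt (deriv u) (-l ^ 2 * u t - α t) t := by
      rw [← hueq t]; exact (hud' t).hasDerivAt
    have := ((h1.mul hu'').sub (((hasDerivAt_const t l).mul h2).mul hu'))
    convert this using 1
    · rfl
    · rfl
    · rfl
    · simp only [Pi.mul_apply]
      ring
  have hint : IntegrableOn (fun τ => -(Real.sin (l * τ) * α τ)) (Ioi (0 : ℝ)) := by
    have hc : Continuous (fun τ => -(Real.sin (l * τ) * α τ)) := by
      exact ((Real.continuous_sin.comp (continuous_const.mul continuous_id)).mul hcont).neg
    have hcs : HasCompactSupport (fun τ => Real.sin (l * τ) * α τ) := hsupp.mul_left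
    have hc0 : Continuous (fun τ => Real.sin (l * τ) * α τ) :=
      (Real.continuous_sin.comp (continuous_const.mul continuous_id)).mul hcont
    exact ((hc0.integrable_of_hasCompactSupport hcs).integrableOn).neg
  have hElim : Tendsto E atTop (nhds 0) := by
    have h1 : Tendsto (fun t => Real.sin (l * t) * deriv u t) atTop (nhds 0) := by
      refine squeeze_zero_norm (a := fun t => |deriv u t|) ?_ ?_
      · intro t
        rw [Real.norm_eq_abs, abs_mul]
        calc |Real.sin (l * t)| * |deriv u t| ≤ 1 * |deriv u t| := by
              gcongr; exact Real.abs_sin_le_one _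
          _ = |deriv u t| := one_mul _
      · simpa using hu0'.abs
    have h2 : Tendsto (fun t => l * Real.cos (l * t) * u t) atTop (nhds 0) := by
      refine squeeze_zero_norm (a := fun t => l * |u t|) ?_ ?_
      · intro t
        rw [Real.norm_eq_abs, abs_mul, abs_mul, abs_of_pos hl]
        calc l * |Real.cos (l * t)| * |u t| ≤ l * 1 * |u t| := by
              gcongr; exact Real.abs_cos_le_one _
          _ = l * |u t| := by ring
      · simpa using (hu0.abs.const_mul l)
    simpa using h1.sub h2
  have hkey : ∫ τ in Ioi (0 : ℝ), -(Real.sin (l * τ) * α τ) = 0 - E 0 := by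
    apply integral_Ioi_of_hasDerivAt_of_tendsto
    · exact (hEderiv 0).continuousAt.continuousWithinAt
    · intro x _; exact hEderiv x
    · exact hint
    · exact hElim
  have hE0 : E 0 = -l * u 0 := by simp [hE]
  rw [hE0] at hkey
  have hIci : ∫ τ in Ici (0 : ℝ), Real.sin (l * τ) * α τ
      = ∫ τ in Ioi (0 : ℝ), Real.sin (l * τ) * α τ := integral_Ici_eq_integral_Ioi
  rw [integral_neg] at hkey
  have hlne : l ≠ 0 := hl.ne'
  rw [hIci]
  field_simp
  linarith [hkey]
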